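/- Let G be a finite connected simple graph that is maximally independent of type 3, and let u, v be distinct vertices of G that are not adjacent in G. Then the graph G + (u,v), obtained from G by adding the edge (u,v), is an edge-disjoint union of two spanning trees. -/

import Mathlib

open SimpleGraph

noncomputable section

/-- The freedom number `f(H) = 2|V(H)| - |E(H)|` of a subgraph. -/
def subFreedom {V : Type} {G : SimpleGraph V} (H : G.Subgraph) : ℤ :=
  2 * (H.verts.ncard : ℤ) - (H.edgeSet.ncard : ℤ)

/-- The freedom number `f(G) = 2|V| - |E|` of a graph. -/
def gFreedom {V : Type} (G : SimpleGraph V) : ℤ :=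
  2 * ((Set.univ : Set V).ncard : ℤ) - (G.edgeSet.ncard : ℤ)

/-- `G` is independent of type 2: every subgraph (with nonempty vertex set)
has freedom number at least 2. -/
def Indep2 {V : Type} (G : SimpleGraph V) : Prop :=
  ∀ H : G.Subgraph, H.verts.Nonempty → 2 ≤ subFreedom H

/-- `G` is maximally independent of type 2. -/
def MaxIndep2 {V : Type} (G : SimpleGraph V) : Prop := Indep2 G ∧ gFreedom G = 2

/-- `G` is independent of type 3: every subgraph with at least one edge
has freedom number at least 3. -/
def Indep3 {V : Type} (G : SimpleGraph V) : Prop :=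
  ∀ H : G.Subgraph, H.edgeSet.Nonempty → 3 ≤ subFreedom H

/-- `G` is maximally independent of type 3. -/
def MaxIndep3 {V : Type} (G : SimpleGraph V) : Prop := Indep3 G ∧ gFreedom G = 3

/-- A Laman graph: connected and maximally independent of type 3. -/
def Laman {V : Type} (G : SimpleGraph V) : Prop := G.Connected ∧ MaxIndep3 G

/-- Henneberg 1 move: `G'` (on vertex type `β`) is obtained from `G` (on `α`)
via the vertex embedding `φ` by adjoining the new vertex `w` joined to the images
of two distinct vertices `a`, `b` of `G`. -/
def Henneberg1Rel {α β : Type} (G : SimpleGraph α) (G' : SimpleGraph β)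
    (φ : α ↪ β) (w : β) : Prop :=
  (∀ y : β, y ∈ Set.range φ ∨ y = w) ∧ w ∉ Set.range φ ∧
  ∃ a b : α, a ≠ b ∧
    ∀ x y : β, G'.Adj x y ↔
      ((∃ c d : α, G.Adj c d ∧ x = φ c ∧ y = φ d) ∨
       (x = w ∧ (y = φ a ∨ y = φ b)) ∨ (y = w ∧ (x = φ a ∨ x = φ b)))

/-- Henneberg 2 move: `G'` is obtained from `G` by breaking the edge `(u,v)` of `G`
at the new vertex `w` and adding an edge from `w` to a third vertex `z`. -/
def Henneberg2Rel {α β : Type} (G : SimpleGraph α) (G' : SimpleGraph β)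
    (φ : α ↪ β) (w : β) : Prop :=
  (∀ y : β, y ∈ Set.range φ ∨ y = w) ∧ w ∉ Set.range φ ∧
  ∃ u v z : α, G.Adj u v ∧ z ≠ u ∧ z ≠ v ∧
    ∀ x y : β, G'.Adj x y ↔
      ((∃ a b : α, G.Adj a b ∧ ¬ (s(a, b) = s(u, v)) ∧ x = φ a ∧ y = φ b) ∨
       (x = w ∧ (y = φ u ∨ y = φ v ∨ y = φ z)) ∨
       (y = w ∧ (x = φ u ∨ x = φ v ∨ x = φ z)))

def finCastSuccEmb (n : ℕ) : Fin n ↪ Fin (n + 1) :=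
  ⟨Fin.castSucc, Fin.castSucc_injective n⟩

/-- `Derived G0 n G` : the graph `G` on `Fin n` is obtained from the base graph `G0`
by a finite sequence of Henneberg 1 and Henneberg 2 moves. -/
inductive Derived {m : ℕ} (G0 : SimpleGraph (Fin m)) : (n : ℕ) → SimpleGraph (Fin n) → Prop
  | base : Derived G0 m G0
  | h1 {n : ℕ} {G : SimpleGraph (Fin n)} {G' : SimpleGraph (Fin (n + 1))} :
      Derived G0 n G → Henneberg1Rel G G' (finCastSuccEmb n) (Fin.last n) →
      Derived G0 (n + 1) G'
  | h2 {n : ℕ} {G : SimpleGraph (Fin n)} {G' : SimpleGraph (Fin (n + 1))} :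
      Derived G0 n G → Henneberg2Rel G G' (finCastSuccEmb n) (Fin.last n) →
      Derived G0 (n + 1) G'

/-- `G` is an edge-disjoint union of two spanning trees. -/
def TwoSpanningTrees {V : Type} (G : SimpleGraph V) : Prop :=
  ∃ E₁ E₂ : Set (Sym2 V), E₁ ∪ E₂ = G.edgeSet ∧ Disjoint E₁ E₂ ∧
    (SimpleGraph.fromEdgeSet E₁).IsTree ∧ (SimpleGraph.fromEdgeSet E₂).IsTree

open SimpleGraph Finset
open scoped Classical

set_option linter.unusedSectionVars false
set_option maxHeartbeats 1000000

section Helpers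
variable {V : Type} [DecidableEq V]

def Inside (X : Finset V) (e : Sym2 V) : Prop := ∀ x ∈ e, x ∈ X

lemma inside_mk {X : Finset V} {p q : V} : Inside X s(p,q) ↔ p ∈ X ∧ q ∈ X := by
  constructor
  · intro h; exact ⟨h p (Sym2.mem_mk_left p q), h q (Sym2.mem_mk_right p q)⟩
  · rintro ⟨h1, h2⟩ x hx
    rcases Sym2.mem_iff.mp hx with rfl | rfl <;> assumption

lemma inside_mono {X Y : Finset V} (h : X ⊆ Y) {e : Sym2 V} (he : Inside X e) : Inside Y e :=
  fun x hx => h (he x hx)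

noncomputable def eC (E : Finset (Sym2 V)) (X : Finset V) : ℕ := (E.filter (Inside X)).card
noncomputable def degE (E : Finset (Sym2 V)) (w : V) : ℕ := (E.filter (fun e => w ∈ e)).card

lemma exists_other {e : Sym2 V} {w : V} (hw : w ∈ e) (hd : ¬ e.IsDiag) :
    ∃ a, a ≠ w ∧ e = s(w,a) := by
  induction e using Sym2.ind with
  | _ x y =>
    rcases Sym2.mem_iff.mp hw with rfl | rfl
    · exact ⟨y, fun h => hd (by simp [h, Sym2.isDiag_iff_proj_eq]), rfl⟩
    · exact ⟨x, fun h => hd (by simp [h, Sym2.isDiag_iff_proj_eq]), Sym2.eq_swap⟩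

lemma reach_of_forall_adj {G H : SimpleGraph V} (h : ∀ x y, G.Adj x y → H.Reachable x y)
    {a b : V} (hr : G.Reachable a b) : H.Reachable a b := by
  obtain ⟨p⟩ := hr
  induction p with
  | nil => exact Reachable.refl _
  | cons ha p ih => exact (h _ _ ha).trans ih

lemma submod (E : Finset (Sym2 V)) (X Y : Finset V) :
    eC E X + eC E Y ≤ eC E (X ∪ Y) + eC E (X ∩ Y) := by
  have key : (E.filter (Inside X)).card + (E.filter (Inside Y)).card
      = ((E.filter (Inside X)) ∪ (E.filter (Inside Y))).card
        + ((E.filter (Inside X)) ∩ (E.filter (Inside Y))).card :=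
    (Finset.card_union_add_card_inter _ _).symm
  have h1 : (E.filter (Inside X)) ∪ (E.filter (Inside Y)) ⊆ E.filter (Inside (X ∪ Y)) := by
    intro e he
    rcases Finset.mem_union.mp he with he | he <;> rw [Finset.mem_filter] at he ⊢
    · exact ⟨he.1, fun x hx => Finset.mem_union.mpr (Or.inl (he.2 x hx))⟩
    · exact ⟨he.1, fun x hx => Finset.mem_union.mpr (Or.inr (he.2 x hx))⟩
  have h2 : (E.filter (Inside X)) ∩ (E.filter (Inside Y)) = E.filter (Inside (X ∩ Y)) := by
    ext e
    simp only [Finset.mem_inter, Finset.mem_filter]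
    constructor
    · rintro ⟨⟨he, hX⟩, ⟨_, hY⟩⟩
      exact ⟨he, fun x hx => Finset.mem_inter.mpr ⟨hX x hx, hY x hx⟩⟩
    · rintro ⟨he, hXY⟩
      exact ⟨⟨he, fun x hx => (Finset.mem_inter.mp (hXY x hx)).1⟩,
             ⟨he, fun x hx => (Finset.mem_inter.mp (hXY x hx)).2⟩⟩
  calc eC E X + eC E Y = _ := key
    _ ≤ _ := by
        rw [h2]
        exact Nat.add_le_add_right (Finset.card_le_card h1) _
    _ = eC E (X ∪ Y) + eC E (X ∩ Y) := rfl

lemma eC_add_degE {S : Finset V} {E : Finset (Sym2 V)} (hE : ∀ e ∈ E, Inside S e) (w : V) :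
    eC E (S.erase w) + degE E w = E.card := by
  have h1 : E.filter (Inside (S.erase w)) = E.filter (fun e => ¬ w ∈ e) := by
    apply Finset.filter_congr
    intro e he
    constructor
    · intro h hw; exact (Finset.mem_erase.mp (h w hw)).1 rfl
    · intro h x hx
      exact Finset.mem_erase.mpr ⟨fun hxw => h (hxw ▸ hx), hE e he x hx⟩
  have h2 : (E.filter (fun e => w ∈ e)).card + (E.filter (fun e => ¬ w ∈ e)).card = E.card :=
    Finset.card_filter_add_card_filter_not (fun e => w ∈ e)
  unfold eC degE
  rw [h1]
  omega

lemma eC_restrict {E : Finset (Sym2 V)} {w : V} {X : Finset V} (hwX : w ∉ X) :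
    eC (E.filter (fun e => ¬ w ∈ e)) X = eC E X := by
  unfold eC
  congr 1
  ext e
  simp only [Finset.mem_filter, and_assoc]
  constructor
  · rintro ⟨h1, _, h3⟩; exact ⟨h1, h3⟩
  · rintro ⟨h1, h3⟩; exact ⟨h1, fun hw => hwX (h3 w hw), h3⟩

lemma card_filter_mem_eq_two {S : Finset V} {e : Sym2 V} (hd : ¬ e.IsDiag) (hin : Inside S e) :
    (S.filter (fun x => x ∈ e)).card = 2 := by
  induction e using Sym2.ind with
  | _ p q =>
    have hpq : p ≠ q := fun h => hd (by simp [h, Sym2.isDiag_iff_proj_eq])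
    have : S.filter (fun x => x ∈ s(p,q)) = {p, q} := by
      ext z
      simp only [Finset.mem_filter, Sym2.mem_iff, Finset.mem_insert, Finset.mem_singleton]
      constructor
      · rintro ⟨_, h⟩; exact h
      · rintro (rfl | rfl)
        · exact ⟨(inside_mk.mp hin).1, Or.inl rfl⟩
        · exact ⟨(inside_mk.mp hin).2, Or.inr rfl⟩
    rw [this, Finset.card_insert_of_notMem (by simpa using hpq), Finset.card_singleton]

lemma handshake {S : Finset V} {E : Finset (Sym2 V)}
    (hE : ∀ e ∈ E, ¬ e.IsDiag ∧ Inside S e) :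
    ∑ x ∈ S, degE E x = 2 * E.card := by
  unfold degE
  have : ∀ x, (E.filter (fun e => x ∈ e)).card = ∑ e ∈ E, if x ∈ e then 1 else 0 := by
    intro x; rw [Finset.card_filter]
  simp_rw [this]
  rw [Finset.sum_comm]
  have : ∀ e ∈ E, (∑ x ∈ S, if x ∈ e then 1 else 0) = 2 := by
    intro e he
    rw [← Finset.card_filter]
    exact card_filter_mem_eq_two (hE e he).1 (hE e he).2
  rw [Finset.sum_congr rfl this]
  simp [Finset.sum_const, mul_comm]

end Helpers
section Sparsity
variable {V : Type} [DecidableEq V]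

def Sparse (S : Finset V) (E : Finset (Sym2 V)) : Prop :=
  ∀ X : Finset V, X ⊆ S → 2 ≤ X.card → eC E X + 3 ≤ 2 * X.card

def LamanE (S : Finset V) (E : Finset (Sym2 V)) : Prop :=
  (∀ e ∈ E, ¬ e.IsDiag ∧ Inside S e) ∧ Sparse S E ∧ E.card + 3 = 2 * S.card

lemma min_degree {S : Finset V} {E : Finset (Sym2 V)} (hL : LamanE S E)
    (h3 : 3 ≤ S.card) {w : V} (hw : w ∈ S) : 2 ≤ degE E w := by
  have hsub : S.erase w ⊆ S := Finset.erase_subset _ _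
  have hc : (S.erase w).card = S.card - 1 := Finset.card_erase_of_mem hw
  have hsp := hL.2.1 (S.erase w) hsub (by omega)
  have hsplit := eC_add_degE (fun e he => (hL.1 e he).2) w
  have ht := hL.2.2
  omega

lemma exists_low_degree {S : Finset V} {E : Finset (Sym2 V)} (hL : LamanE S E)
    (h3 : 3 ≤ S.card) {u v : V} (hu : u ∈ S) (hv : v ∈ S) (huv : u ≠ v) :
    ∃ w ∈ S, w ≠ u ∧ w ≠ v ∧ degE E w ≤ 3 := by
  by_contra hcon
  push_neg at hcon
  have hsum : ∑ x ∈ S, degE E x = 2 * E.card := handshake hL.1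
  have hS' : ((S.erase u).erase v).card = S.card - 2 := by
    rw [Finset.card_erase_of_mem (Finset.mem_erase.mpr ⟨huv.symm, hv⟩),
        Finset.card_erase_of_mem hu]
    omega
  have hlow : ∀ x ∈ (S.erase u).erase v, 4 ≤ degE E x := by
    intro x hx
    have hx1 := Finset.mem_erase.mp hx
    have hx2 := Finset.mem_erase.mp hx1.2
    exact hcon x hx2.2 hx2.1 hx1.1
  have hbound : ((S.erase u).erase v).card * 4 ≤ ∑ x ∈ (S.erase u).erase v, degE E x := by
    calc ((S.erase u).erase v).card * 4 = ∑ _x ∈ (S.erase u).erase v, 4 := by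
          rw [Finset.sum_const]; ring
      _ ≤ _ := Finset.sum_le_sum hlow
  have hsplit1 : ∑ x ∈ (S.erase u).erase v, degE E x + degE E v = ∑ x ∈ S.erase u, degE E x :=
    Finset.sum_erase_add _ _ (Finset.mem_erase.mpr ⟨huv.symm, hv⟩)
  have hsplit2 : ∑ x ∈ S.erase u, degE E x + degE E u = ∑ x ∈ S, degE E x :=
    Finset.sum_erase_add _ _ hu
  have hdu : 2 ≤ degE E u := min_degree hL h3 hu
  have hdv : 2 ≤ degE E v := min_degree hL h3 hv
  have ht := hL.2.2
  omega

/-- tight vertex sets -/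
def TightAt (S : Finset V) (E : Finset (Sym2 V)) (w : V) (X : Finset V) : Prop :=
  X ⊆ S.erase w ∧ 2 ≤ X.card ∧ eC E X + 3 = 2 * X.card

lemma tight_of_bad {S : Finset V} {E : Finset (Sym2 V)} (hL : LamanE S E) {w x y : V}
    (hx : x ∈ S.erase w) (hy : y ∈ S.erase w) (hxy : x ≠ y)
    (hbad : ¬ (s(x,y) ∉ E ∧ Sparse (S.erase w) (insert s(x,y) (E.filter (fun e => ¬ w ∈ e))))) :
    ∃ X, TightAt S E w X ∧ x ∈ X ∧ y ∈ X := by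
  by_cases hmem : s(x,y) ∈ E
  · refine ⟨{x, y}, ⟨?_, ?_, ?_⟩, by simp, by simp⟩
    · exact Finset.insert_subset hx (Finset.singleton_subset_iff.mpr hy)
    · rw [Finset.card_insert_of_notMem (by simpa using hxy), Finset.card_singleton]
    · have h1 : 1 ≤ eC E {x, y} := by
        apply Finset.card_pos.mpr
        exact ⟨s(x,y), Finset.mem_filter.mpr ⟨hmem, inside_mk.mpr ⟨by simp, by simp⟩⟩⟩
      have h2 : eC E {x, y} + 3 ≤ 2 * ({x, y} : Finset V).card := by
        apply hL.2.1 _ (Finset.insert_subset ((Finset.erase_subset _ _) hx)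
          (Finset.singleton_subset_iff.mpr ((Finset.erase_subset _ _) hy)))
        rw [Finset.card_insert_of_notMem (by simpa using hxy), Finset.card_singleton]
      rw [Finset.card_insert_of_notMem (by simpa using hxy), Finset.card_singleton] at h2 ⊢
      omega
  · have hns : ¬ Sparse (S.erase w) (insert s(x,y) (E.filter (fun e => ¬ w ∈ e))) :=
      fun hs => hbad ⟨hmem, hs⟩
    unfold Sparse at hns
    push_neg at hns
    obtain ⟨X, hXsub, hX2, hgt⟩ := hns
    have hwX : w ∉ X := fun h => (Finset.mem_erase.mp (hXsub h)).1 rfl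
    have hXS : X ⊆ S := hXsub.trans (Finset.erase_subset _ _)
    have hsxyE' : s(x,y) ∉ E.filter (fun e => ¬ w ∈ e) :=
      fun h => hmem (Finset.mem_filter.mp h).1
    by_cases hIn : Inside X s(x,y)
    · have h1 : eC (insert s(x,y) (E.filter (fun e => ¬ w ∈ e))) X
          = eC (E.filter (fun e => ¬ w ∈ e)) X + 1 := by
        unfold eC
        rw [Finset.filter_insert, if_pos hIn,
          Finset.card_insert_of_notMem (fun h => hsxyE' (Finset.mem_filter.mp h).1)]
      have h2 := eC_restrict (E := E) hwX
      have h3 := hL.2.1 X hXS hX2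
      refine ⟨X, ⟨hXsub, hX2, by omega⟩, (inside_mk.mp hIn).1, (inside_mk.mp hIn).2⟩
    · exfalso
      have h1 : eC (insert s(x,y) (E.filter (fun e => ¬ w ∈ e))) X
          = eC (E.filter (fun e => ¬ w ∈ e)) X := by
        unfold eC
        rw [Finset.filter_insert, if_neg hIn]
      have h2 := eC_restrict (E := E) hwX
      have h3 := hL.2.1 X hXS hX2
      omega

lemma kill {S : Finset V} {E : Finset (Sym2 V)} (hL : LamanE S E) {w : V} (hw : w ∈ S)
    {a b c : V} (hab : a ≠ b) (hac : a ≠ c) (hbc : b ≠ c)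
    (hea : s(w,a) ∈ E) (heb : s(w,b) ∈ E) (hec : s(w,c) ∈ E)
    {X : Finset V} (hXsub : X ⊆ S.erase w) (hX2 : 2 ≤ X.card)
    (ha : a ∈ X) (hb : b ∈ X) (hc : c ∈ X)
    (hlow : 2 * X.card ≤ eC E X + 3) : False := by
  have hwX : w ∉ X := fun h => (Finset.mem_erase.mp (hXsub h)).1 rfl
  set X' := insert w X with hX'
  have hX'S : X' ⊆ S := Finset.insert_subset hw (hXsub.trans (Finset.erase_subset _ _))
  have hX'c : X'.card = X.card + 1 := Finset.card_insert_of_notMem hwX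
  have hsp := hL.2.1 X' hX'S (by omega)
  -- the three w-edges together with edges inside X all lie inside X'
  have hsub : insert s(w,a) (insert s(w,b) {s(w,c)}) ∪ E.filter (Inside X)
      ⊆ E.filter (Inside X') := by
    intro e he
    rcases Finset.mem_union.mp he with he | he
    · simp only [Finset.mem_insert, Finset.mem_singleton] at he
      rcases he with rfl | rfl | rfl
      · exact Finset.mem_filter.mpr ⟨hea, inside_mk.mpr ⟨Finset.mem_insert_self _ _,
          Finset.mem_insert_of_mem ha⟩⟩
      · exact Finset.mem_filter.mpr ⟨heb, inside_mk.mpr ⟨Finset.mem_insert_self _ _,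
          Finset.mem_insert_of_mem hb⟩⟩
      · exact Finset.mem_filter.mpr ⟨hec, inside_mk.mpr ⟨Finset.mem_insert_self _ _,
          Finset.mem_insert_of_mem hc⟩⟩
    · have := Finset.mem_filter.mp he
      exact Finset.mem_filter.mpr ⟨this.1, inside_mono (Finset.subset_insert _ _) this.2⟩
  have hdisj : Disjoint (insert s(w,a) (insert s(w,b) {s(w,c)})) (E.filter (Inside X)) := by
    rw [Finset.disjoint_left]
    intro e he he'
    have hins := (Finset.mem_filter.mp he').2
    simp only [Finset.mem_insert, Finset.mem_singleton] at he
    rcases he with rfl | rfl | rfl <;>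
      exact hwX ((inside_mk.mp hins).1)
  have hcard3 : (insert s(w,a) (insert s(w,b) {s(w,c)}) : Finset (Sym2 V)).card = 3 := by
    rw [Finset.card_insert_of_notMem, Finset.card_insert_of_notMem, Finset.card_singleton]
    · simp only [Finset.mem_singleton]
      intro h
      rcases Sym2.eq_iff.mp h with ⟨-, h'⟩ | ⟨h1, h2⟩
      · exact hbc h'
      · exact hbc (h2.trans h1)
    · simp only [Finset.mem_insert, Finset.mem_singleton]
      rintro (h | h) <;> rcases Sym2.eq_iff.mp h with ⟨-, h'⟩ | ⟨h1, h2⟩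
      · exact hab h'
      · exact hab (h2.trans h1)
      · exact hac h'
      · exact hac (h2.trans h1)
  have hge : eC E X + 3 ≤ eC E X' := by
    have := Finset.card_le_card hsub
    rw [Finset.card_union_of_disjoint hdisj, hcard3] at this
    unfold eC
    omega
  omega

end Sparsity
section Henneberg
variable {V : Type} [DecidableEq V]

lemma tight_merge {S : Finset V} {E : Finset (Sym2 V)} (hL : LamanE S E) {w : V}
    {X Y : Finset V} (hX : TightAt S E w X) (hY : TightAt S E w Y)
    (hXY : 2 ≤ (X ∩ Y).card) : TightAt S E w (X ∪ Y) := by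
  obtain ⟨hXs, hX2, hXt⟩ := hX
  obtain ⟨hYs, hY2, hYt⟩ := hY
  have hUs : X ∪ Y ⊆ S.erase w := Finset.union_subset hXs hYs
  have hsm := submod E X Y
  have hcui := Finset.card_union_add_card_inter X Y
  have hspU := hL.2.1 (X ∪ Y) (hUs.trans (Finset.erase_subset _ _))
    (le_trans hX2 (Finset.card_le_card Finset.subset_union_left))
  have hspI := hL.2.1 (X ∩ Y) ((Finset.inter_subset_left).trans
    (hXs.trans (Finset.erase_subset _ _))) hXY
  exact ⟨hUs, le_trans hX2 (Finset.card_le_card Finset.subset_union_left), by omega⟩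

lemma filter_inside_disjoint {E : Finset (Sym2 V)} (hnd : ∀ e ∈ E, ¬ e.IsDiag)
    {X Y : Finset V} (h : (X ∩ Y).card ≤ 1) :
    Disjoint (E.filter (Inside X)) (E.filter (Inside Y)) := by
  rw [Finset.disjoint_left]
  intro e heX heY
  obtain ⟨heE, hiX⟩ := Finset.mem_filter.mp heX
  obtain ⟨-, hiY⟩ := Finset.mem_filter.mp heY
  induction e using Sym2.ind with
  | _ p q =>
    have hp : p ∈ X ∩ Y := Finset.mem_inter.mpr ⟨(inside_mk.mp hiX).1, (inside_mk.mp hiY).1⟩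
    have hq : q ∈ X ∩ Y := Finset.mem_inter.mpr ⟨(inside_mk.mp hiX).2, (inside_mk.mp hiY).2⟩
    have : p = q := Finset.card_le_one.mp h p hp q hq
    exact hnd _ heE (by simp [this, Sym2.isDiag_iff_proj_eq])

lemma henneberg {S : Finset V} {E : Finset (Sym2 V)} (hL : LamanE S E) {w : V} (hw : w ∈ S)
    {a b c : V} (ha : a ∈ S.erase w) (hb : b ∈ S.erase w) (hc : c ∈ S.erase w)
    (hab : a ≠ b) (hac : a ≠ c) (hbc : b ≠ c)
    (hea : s(w,a) ∈ E) (heb : s(w,b) ∈ E) (hec : s(w,c) ∈ E) :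
    ∃ x y z : V, x ∈ S.erase w ∧ y ∈ S.erase w ∧ z ∈ S.erase w ∧ x ≠ y ∧ z ≠ x ∧ z ≠ y ∧
      ({s(w,x), s(w,y), s(w,z)} : Finset (Sym2 V)) = {s(w,a), s(w,b), s(w,c)} ∧
      s(x,y) ∉ E ∧ Sparse (S.erase w) (insert s(x,y) (E.filter (fun e => ¬ w ∈ e))) := by
  by_cases g1 : s(a,b) ∉ E ∧ Sparse (S.erase w) (insert s(a,b) (E.filter (fun e => ¬ w ∈ e)))
  · exact ⟨a, b, c, ha, hb, hc, hab, hac.symm, hbc.symm, rfl, g1.1, g1.2⟩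
  by_cases g2 : s(a,c) ∉ E ∧ Sparse (S.erase w) (insert s(a,c) (E.filter (fun e => ¬ w ∈ e)))
  · refine ⟨a, c, b, ha, hc, hb, hac, hab.symm, hbc, ?_, g2.1, g2.2⟩
    ext e; simp only [Finset.mem_insert, Finset.mem_singleton]; tauto
  by_cases g3 : s(b,c) ∉ E ∧ Sparse (S.erase w) (insert s(b,c) (E.filter (fun e => ¬ w ∈ e)))
  · refine ⟨b, c, a, hb, hc, ha, hbc, hab, hac, ?_, g3.1, g3.2⟩
    ext e; simp only [Finset.mem_insert, Finset.mem_singleton]; tauto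
  exfalso
  obtain ⟨Xab, hXab, hab1, hab2⟩ := tight_of_bad hL ha hb hab g1
  obtain ⟨Xac, hXac, hac1, hac2⟩ := tight_of_bad hL ha hc hac g2
  obtain ⟨Xbc, hXbc, hbc1, hbc2⟩ := tight_of_bad hL hb hc hbc g3
  by_cases m1 : 2 ≤ (Xab ∩ Xac).card
  · obtain ⟨hUs, hU2, hUt⟩ := tight_merge hL hXab hXac m1
    exact kill hL hw hab hac hbc hea heb hec hUs hU2
      (Finset.mem_union_left _ hab1) (Finset.mem_union_left _ hab2)
      (Finset.mem_union_right _ hac2) (by omega)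
  by_cases m2 : 2 ≤ (Xab ∩ Xbc).card
  · obtain ⟨hUs, hU2, hUt⟩ := tight_merge hL hXab hXbc m2
    exact kill hL hw hab hac hbc hea heb hec hUs hU2
      (Finset.mem_union_left _ hab1) (Finset.mem_union_left _ hab2)
      (Finset.mem_union_right _ hbc2) (by omega)
  by_cases m3 : 2 ≤ (Xac ∩ Xbc).card
  · obtain ⟨hUs, hU2, hUt⟩ := tight_merge hL hXac hXbc m3
    exact kill hL hw hab hac hbc hea heb hec hUs hU2
      (Finset.mem_union_left _ hac1) (Finset.mem_union_right _ hbc1)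
      (Finset.mem_union_left _ hac2) (by omega)
  push_neg at m1 m2 m3
  -- all pairwise intersections are singletons
  have i1 : Xab ∩ Xac = {a} := by
    apply Finset.eq_singleton_iff_unique_mem.mpr
    exact ⟨Finset.mem_inter.mpr ⟨hab1, hac1⟩,
      fun x hx => Finset.card_le_one.mp (by omega) x hx a (Finset.mem_inter.mpr ⟨hab1, hac1⟩)⟩
  have i2 : Xab ∩ Xbc = {b} := by
    apply Finset.eq_singleton_iff_unique_mem.mpr
    exact ⟨Finset.mem_inter.mpr ⟨hab2, hbc1⟩,
      fun x hx => Finset.card_le_one.mp (by omega) x hx b (Finset.mem_inter.mpr ⟨hab2, hbc1⟩)⟩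
  have i3 : Xac ∩ Xbc = {c} := by
    apply Finset.eq_singleton_iff_unique_mem.mpr
    exact ⟨Finset.mem_inter.mpr ⟨hac2, hbc2⟩,
      fun x hx => Finset.card_le_one.mp (by omega) x hx c (Finset.mem_inter.mpr ⟨hac2, hbc2⟩)⟩
  set U : Finset V := (Xab ∪ Xac) ∪ Xbc with hU
  obtain ⟨habs, hab2', habt⟩ := hXab
  obtain ⟨hacs, hac2', hact⟩ := hXac
  obtain ⟨hbcs, hbc2', hbct⟩ := hXbc
  have hUs : U ⊆ S.erase w := Finset.union_subset (Finset.union_subset habs hacs) hbcs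
  -- cardinality of U
  have c1 : (Xab ∪ Xac).card + 1 = Xab.card + Xac.card := by
    have := Finset.card_union_add_card_inter Xab Xac
    rw [i1] at this; simpa using this
  have c2 : U.card + 2 = (Xab ∪ Xac).card + Xbc.card := by
    have := Finset.card_union_add_card_inter (Xab ∪ Xac) Xbc
    rw [Finset.union_inter_distrib_right, i2, i3] at this
    have hbccard : ({b} ∪ {c} : Finset V).card = 2 := by
      have hset : ({b} ∪ {c} : Finset V) = {b, c} := by ext x; simp
      rw [hset, Finset.card_insert_of_notMem (by simpa using hbc), Finset.card_singleton]
    rw [hbccard] at this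
    rw [hU]
    omega
  -- edge count of U
  have hnd : ∀ e ∈ E, ¬ e.IsDiag := fun e he => (hL.1 e he).1
  have d1 : Disjoint (E.filter (Inside Xab)) (E.filter (Inside Xac)) :=
    filter_inside_disjoint hnd (by omega)
  have d2 : Disjoint (E.filter (Inside Xab) ∪ E.filter (Inside Xac)) (E.filter (Inside Xbc)) := by
    rw [Finset.disjoint_union_left]
    exact ⟨filter_inside_disjoint hnd (by omega), filter_inside_disjoint hnd (by omega)⟩
  have hsub : (E.filter (Inside Xab) ∪ E.filter (Inside Xac)) ∪ E.filter (Inside Xbc)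
      ⊆ E.filter (Inside U) := by
    intro e he
    rcases Finset.mem_union.mp he with he | he
    · rcases Finset.mem_union.mp he with he | he <;> obtain ⟨h1, h2⟩ := Finset.mem_filter.mp he
      · exact Finset.mem_filter.mpr ⟨h1, inside_mono
          ((Finset.subset_union_left).trans Finset.subset_union_left) h2⟩
      · exact Finset.mem_filter.mpr ⟨h1, inside_mono
          ((Finset.subset_union_right).trans Finset.subset_union_left) h2⟩
    · obtain ⟨h1, h2⟩ := Finset.mem_filter.mp he
      exact Finset.mem_filter.mpr ⟨h1, inside_mono Finset.subset_union_right h2⟩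
  have hcount : eC E Xab + eC E Xac + eC E Xbc ≤ eC E U := by
    have hle := Finset.card_le_card hsub
    rw [Finset.card_union_of_disjoint d2, Finset.card_union_of_disjoint d1] at hle
    exact hle
  exact kill hL hw hab hac hbc hea heb hec hUs
    (le_trans hab2' (Finset.card_le_card ((Finset.subset_union_left).trans
      Finset.subset_union_left)))
    (Finset.mem_union_left _ (Finset.mem_union_left _ hab1))
    (Finset.mem_union_left _ (Finset.mem_union_left _ hab2))
    (Finset.mem_union_right _ hbc2) (by omega)

end Henneberg
section Conn
variable {V : Type} [DecidableEq V]

def connOn (A : Finset V) (T : Finset (Sym2 V)) : Prop :=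
  ∀ x ∈ A, ∀ y ∈ A, (fromEdgeSet (↑T : Set (Sym2 V))).Reachable x y

lemma adj_fe {T : Finset (Sym2 V)} {p q : V} (h : s(p,q) ∈ T) (hpq : p ≠ q) :
    (fromEdgeSet (↑T : Set (Sym2 V))).Adj p q := by
  rw [fromEdgeSet_adj]
  exact ⟨Finset.mem_coe.mpr h, hpq⟩

lemma connOn_mono {A : Finset V} {T T' : Finset (Sym2 V)} (h : T ⊆ T') (hc : connOn A T) :
    connOn A T' :=
  fun x hx y hy => (hc x hx y hy).mono (fromEdgeSet_mono (Finset.coe_subset.mpr h))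

lemma connOn_trans {A : Finset V} {T T' : Finset (Sym2 V)}
    (step : ∀ p q, s(p,q) ∈ T → p ≠ q → (fromEdgeSet (↑T' : Set (Sym2 V))).Reachable p q)
    (hc : connOn A T) : connOn A T' := by
  intro x hx y hy
  refine reach_of_forall_adj ?_ (hc x hx y hy)
  intro p q hpq
  rw [fromEdgeSet_adj] at hpq
  exact step p q (Finset.mem_coe.mp hpq.1) hpq.2

lemma connOn_insert_vertex {A : Finset V} {T' : Finset (Sym2 V)} {w t : V} (ht : t ∈ A)
    (hr : (fromEdgeSet (↑T' : Set (Sym2 V))).Reachable w t) (hc : connOn A T') :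
    connOn (insert w A) T' := by
  intro p hp q hq
  rcases Finset.mem_insert.mp hp with hp' | hp' <;> rcases Finset.mem_insert.mp hq with hq' | hq'
  · subst hp'; subst hq'; exact Reachable.refl _
  · subst hp'; exact hr.trans (hc t ht q hq')
  · subst hq'; exact (hc p hp' t ht).trans hr.symm
  · exact hc p hp' q hq'

lemma sym2_wpair_inj {w p q : V} (hp : p ≠ w) (h : s(w,p) = s(w,q)) : p = q := by
  rcases Sym2.eq_iff.mp h with ⟨-, h⟩ | ⟨h1, h2⟩
  · exact h
  · exact absurd h2 hp

def Good (S : Finset V) (E : Finset (Sym2 V)) (u v : V) : Prop :=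
  ∃ T F : Finset (Sym2 V), ∃ A B : Finset V,
    T ∪ F = E ∧ Disjoint T F ∧ T.card + 1 = S.card ∧ F.card + 2 = S.card ∧
    A ∪ B = S ∧ Disjoint A B ∧ u ∈ A ∧ v ∈ B ∧
    (∀ e ∈ F, Inside A e ∨ Inside B e) ∧
    connOn A F ∧ connOn B F ∧ connOn S T

end Conn
section Main
variable {V : Type} [DecidableEq V]

lemma good_main : ∀ (n : ℕ) (S : Finset V) (E : Finset (Sym2 V)) (u v : V),
    S.card = n → LamanE S E → u ∈ S → v ∈ S → u ≠ v → Good S E u v := by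
  intro n
  induction n using Nat.strong_induction_on with
  | _ n IH =>
  intro S E u v hn hL hu hv huv
  have huvS : ({u, v} : Finset V) ⊆ S :=
    Finset.insert_subset hu (Finset.singleton_subset_iff.mpr hv)
  have h2le : 2 ≤ S.card := by
    have := Finset.card_le_card huvS
    rwa [Finset.card_insert_of_notMem (by simpa using huv), Finset.card_singleton] at this
  have hc2 : ({u, v} : Finset V).card = 2 := by
    rw [Finset.card_insert_of_notMem (by simpa using huv), Finset.card_singleton]
  by_cases hbase : S.card = 2
  · -- base case : a single edge
    have hSuv : S = {u, v} := (Finset.eq_of_subset_of_card_le huvS (by omega)).symm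
    have hE1 : E.card = 1 := by have := hL.2.2; omega
    obtain ⟨e0, hE0⟩ := Finset.card_eq_one.mp hE1
    have he0 : e0 ∈ E := hE0 ▸ Finset.mem_singleton_self e0
    obtain ⟨hnd, hin⟩ := hL.1 e0 he0
    have he0uv : e0 = s(u,v) := by
      obtain ⟨q, hq, hee⟩ := exists_other (Sym2.out_fst_mem e0) hnd
      have hp : e0.out.1 ∈ S := hin _ (Sym2.out_fst_mem e0)
      have hq' : q ∈ S := hin q (by rw [hee]; exact Sym2.mem_mk_right _ _)
      rw [hSuv] at hp hq'
      simp only [Finset.mem_insert, Finset.mem_singleton] at hp hq'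
      rcases hp with hp | hp <;> rcases hq' with hq2 | hq2
      · exact absurd (hq2.trans hp.symm) hq
      · rw [hee, hp, hq2]
      · rw [hee, hp, hq2]; exact Sym2.eq_swap
      · exact absurd (hq2.trans hp.symm) hq
    rw [he0uv] at hE0
    refine ⟨{s(u,v)}, ∅, {u}, {v}, by rw [Finset.union_empty, hE0],
      Finset.disjoint_empty_right _, by rw [Finset.card_singleton]; omega,
      by rw [Finset.card_empty]; omega, ?_, Finset.disjoint_singleton.mpr huv, Finset.mem_singleton_self u,
      Finset.mem_singleton_self v, fun e he => absurd he (Finset.notMem_empty e),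
      ?_, ?_, ?_⟩
    · rw [hSuv]; ext z; simp
    · intro x hx y hy
      rw [Finset.mem_singleton] at hx hy
      subst hx; subst hy; exact Reachable.refl _
    · intro x hx y hy
      rw [Finset.mem_singleton] at hx hy
      subst hx; subst hy; exact Reachable.refl _
    · intro x hx y hy
      rw [hSuv] at hx hy
      have hadj := adj_fe (Finset.mem_singleton_self s(u,v)) huv
      simp only [Finset.mem_insert, Finset.mem_singleton] at hx hy
      rcases hx with rfl | rfl <;> rcases hy with rfl | rfl
      · exact Reachable.refl _
      · exact hadj.reachable
      · exact hadj.symm.reachable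
      · exact Reachable.refl _
  -- inductive step
  have h3le : 3 ≤ S.card := by omega
  obtain ⟨w, hwS, hwu, hwv, hdeg3⟩ := exists_low_degree hL h3le hu hv huv
  have hdeg2 := min_degree hL h3le hwS
  have hIE : insert w (S.erase w) = S := Finset.insert_erase hwS
  set E' := E.filter (fun e => ¬ w ∈ e) with hE'
  have hsplitE : E.filter (fun e => w ∈ e) ∪ E' = E := Finset.filter_union_filter_not_eq _ E
  have hcards : (E.filter (fun e => w ∈ e)).card + E'.card = E.card :=
    Finset.card_filter_add_card_filter_not (fun e => w ∈ e)
  have hE'prop : ∀ e ∈ E', ¬ e.IsDiag ∧ Inside (S.erase w) e := by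
    intro e he
    obtain ⟨heE, hwe⟩ := Finset.mem_filter.mp he
    exact ⟨(hL.1 e heE).1, fun x hx =>
      Finset.mem_erase.mpr ⟨fun h => hwe (h ▸ hx), (hL.1 e heE).2 x hx⟩⟩
  have hwE' : ∀ e ∈ E', w ∉ e := fun e he => (Finset.mem_filter.mp he).2
  have hScard : (S.erase w).card + 1 = S.card := by
    rw [Finset.card_erase_of_mem hwS]; omega
  have huS' : u ∈ S.erase w := Finset.mem_erase.mpr ⟨fun h => hwu h.symm, hu⟩
  have hvS' : v ∈ S.erase w := Finset.mem_erase.mpr ⟨fun h => hwv h.symm, hv⟩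
  have hSp' : Sparse (S.erase w) E' := by
    intro X hX h2X
    have hsp := hL.2.1 X (hX.trans (Finset.erase_subset _ _)) h2X
    have hwX : w ∉ X := fun h => (Finset.mem_erase.mp (hX h)).1 rfl
    rw [hE', eC_restrict hwX]
    exact hsp
  have hdegE : degE E w = (E.filter (fun e => w ∈ e)).card := rfl
  have ht := hL.2.2
  rcases (by omega : degE E w = 2 ∨ degE E w = 3) with hdeg | hdeg
  · -- degree-2 vertex
    rw [hdegE] at hdeg
    obtain ⟨e1, e2, hne, hEw⟩ := Finset.card_eq_two.mp hdeg
    have he1 : e1 ∈ E.filter (fun e => w ∈ e) := by rw [hEw]; simp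
    have he2 : e2 ∈ E.filter (fun e => w ∈ e) := by rw [hEw]; simp
    obtain ⟨he1E, he1w⟩ := Finset.mem_filter.mp he1
    obtain ⟨he2E, he2w⟩ := Finset.mem_filter.mp he2
    obtain ⟨x, hxw, he1x⟩ := exists_other he1w (hL.1 e1 he1E).1
    obtain ⟨y, hyw, he2y⟩ := exists_other he2w (hL.1 e2 he2E).1
    have hxy : x ≠ y := fun h => hne (by rw [he1x, he2y, h])
    have hxS : x ∈ S.erase w := Finset.mem_erase.mpr
      ⟨hxw, (hL.1 e1 he1E).2 x (by rw [he1x]; exact Sym2.mem_mk_right _ _)⟩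
    have hyS : y ∈ S.erase w := Finset.mem_erase.mpr
      ⟨hyw, (hL.1 e2 he2E).2 y (by rw [he2y]; exact Sym2.mem_mk_right _ _)⟩
    have hL' : LamanE (S.erase w) E' := ⟨hE'prop, hSp', by omega⟩
    obtain ⟨T, F, A, B, hTF, hTFd, hTc, hFc, hAB, hABd, huA, hvB, hFin, hcA, hcB, hcT⟩ :=
      IH (S.card - 1) (by omega) (S.erase w) E' u v (by omega) hL' huS' hvS' huv
    have hwT : ∀ e ∈ T, w ∉ e := fun e he => hwE' e (hTF ▸ Finset.mem_union_left _ he)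
    have hwF : ∀ e ∈ F, w ∉ e := fun e he => hwE' e (hTF ▸ Finset.mem_union_right _ he)
    have hAsub : A ⊆ S.erase w := hAB ▸ Finset.subset_union_left
    have hBsub : B ⊆ S.erase w := hAB ▸ Finset.subset_union_right
    have hwA : w ∉ A := fun h => (Finset.mem_erase.mp (hAsub h)).1 rfl
    have hwB : w ∉ B := fun h => (Finset.mem_erase.mp (hBsub h)).1 rfl
    have he1T : e1 ∉ T := fun h => hwT e1 h he1w
    have he2F : e2 ∉ F := fun h => hwF e2 h he2w
    have hunion : insert e1 T ∪ insert e2 F = E := by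
      have h12 : ({e1, e2} : Finset (Sym2 V)) ∪ E' = E := by rw [← hEw]; exact hsplitE
      rw [← h12, ← hTF]
      ext e
      simp only [Finset.mem_union, Finset.mem_insert, Finset.mem_singleton]
      tauto
    have hdisj : Disjoint (insert e1 T) (insert e2 F) := by
      rw [Finset.disjoint_left]
      intro e he he'
      rcases Finset.mem_insert.mp he with rfl | he <;>
        rcases Finset.mem_insert.mp he' with h' | h'
      · exact hne h'
      · exact hwF e h' he1w
      · exact hwT e he (h' ▸ he2w)
      · exact Finset.disjoint_left.mp hTFd he h'
    have hTc' : (insert e1 T).card + 1 = S.card := by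
      rw [Finset.card_insert_of_notMem he1T]; omega
    have hFc' : (insert e2 F).card + 2 = S.card := by
      rw [Finset.card_insert_of_notMem he2F]; omega
    have hreach1 : (fromEdgeSet (↑(insert e1 T) : Set (Sym2 V))).Reachable w x := by
      refine (adj_fe ?_ (fun h => hxw h.symm)).reachable
      rw [← he1x]; exact Finset.mem_insert_self _ _
    have hreach2 : (fromEdgeSet (↑(insert e2 F) : Set (Sym2 V))).Reachable w y := by
      refine (adj_fe ?_ (fun h => hyw h.symm)).reachable
      rw [← he2y]; exact Finset.mem_insert_self _ _
    have hcT' : connOn S (insert e1 T) := by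
      have := connOn_insert_vertex hxS hreach1 (connOn_mono (Finset.subset_insert _ _) hcT)
      rwa [hIE] at this
    rcases Finset.mem_union.mp (hAB ▸ hyS : y ∈ A ∪ B) with hyA | hyB
    · refine ⟨insert e1 T, insert e2 F, insert w A, B, hunion, hdisj, hTc', hFc',
        by rw [Finset.insert_union, hAB, hIE], ?_, Finset.mem_insert_of_mem huA, hvB,
        ?_, ?_, ?_, hcT'⟩
      · rw [Finset.disjoint_insert_left]; exact ⟨hwB, hABd⟩
      · intro e he
        rcases Finset.mem_insert.mp he with rfl | he
        · left; rw [he2y]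
          exact inside_mk.mpr ⟨Finset.mem_insert_self _ _, Finset.mem_insert_of_mem hyA⟩
        · exact (hFin e he).imp (inside_mono (Finset.subset_insert _ _)) id
      · exact connOn_insert_vertex hyA hreach2 (connOn_mono (Finset.subset_insert _ _) hcA)
      · exact connOn_mono (Finset.subset_insert _ _) hcB
    · refine ⟨insert e1 T, insert e2 F, A, insert w B, hunion, hdisj, hTc', hFc',
        by rw [Finset.union_insert, hAB, hIE], ?_, huA, Finset.mem_insert_of_mem hvB,
        ?_, ?_, ?_, hcT'⟩
      · rw [Finset.disjoint_insert_right]; exact ⟨hwA, hABd⟩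
      · intro e he
        rcases Finset.mem_insert.mp he with rfl | he
        · right; rw [he2y]
          exact inside_mk.mpr ⟨Finset.mem_insert_self _ _, Finset.mem_insert_of_mem hyB⟩
        · exact (hFin e he).imp id (inside_mono (Finset.subset_insert _ _))
      · exact connOn_mono (Finset.subset_insert _ _) hcA
      · exact connOn_insert_vertex hyB hreach2 (connOn_mono (Finset.subset_insert _ _) hcB)
  · -- degree-3 vertex
    rw [hdegE] at hdeg
    obtain ⟨f1, f2, f3, h12, h13, h23, hEw⟩ := Finset.card_eq_three.mp hdeg
    have hf1 : f1 ∈ E.filter (fun e => w ∈ e) := by rw [hEw]; simp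
    have hf2 : f2 ∈ E.filter (fun e => w ∈ e) := by rw [hEw]; simp
    have hf3 : f3 ∈ E.filter (fun e => w ∈ e) := by rw [hEw]; simp
    obtain ⟨hf1E, hf1w⟩ := Finset.mem_filter.mp hf1
    obtain ⟨hf2E, hf2w⟩ := Finset.mem_filter.mp hf2
    obtain ⟨hf3E, hf3w⟩ := Finset.mem_filter.mp hf3
    obtain ⟨a, haw, hf1a⟩ := exists_other hf1w (hL.1 f1 hf1E).1
    obtain ⟨b, hbw, hf2b⟩ := exists_other hf2w (hL.1 f2 hf2E).1
    obtain ⟨c, hcw, hf3c⟩ := exists_other hf3w (hL.1 f3 hf3E).1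
    have hab : a ≠ b := fun h => h12 (by rw [hf1a, hf2b, h])
    have hac : a ≠ c := fun h => h13 (by rw [hf1a, hf3c, h])
    have hbc : b ≠ c := fun h => h23 (by rw [hf2b, hf3c, h])
    have haS : a ∈ S.erase w := Finset.mem_erase.mpr
      ⟨haw, (hL.1 f1 hf1E).2 a (by rw [hf1a]; exact Sym2.mem_mk_right _ _)⟩
    have hbS : b ∈ S.erase w := Finset.mem_erase.mpr
      ⟨hbw, (hL.1 f2 hf2E).2 b (by rw [hf2b]; exact Sym2.mem_mk_right _ _)⟩
    have hcS : c ∈ S.erase w := Finset.mem_erase.mpr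
      ⟨hcw, (hL.1 f3 hf3E).2 c (by rw [hf3c]; exact Sym2.mem_mk_right _ _)⟩
    obtain ⟨x, y, z, hxS, hyS, hzS, hxy, hzx, hzy, hset, hxyE, hSp2⟩ :=
      henneberg hL hwS haS hbS hcS hab hac hbc (hf1a ▸ hf1E) (hf2b ▸ hf2E) (hf3c ▸ hf3E)
    have hfilterEq : E.filter (fun e => w ∈ e) = {s(w,x), s(w,y), s(w,z)} := by
      rw [hEw, hf1a, hf2b, hf3c, ← hset]
    have hfcard : (E.filter (fun e => w ∈ e)).card = 3 := by
      rw [hEw, Finset.card_insert_of_notMem (by simp [h12, h13]),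
        Finset.card_insert_of_notMem (by simpa using h23), Finset.card_singleton]
    have hxw : x ≠ w := (Finset.mem_erase.mp hxS).1
    have hyw : y ≠ w := (Finset.mem_erase.mp hyS).1
    have hzw : z ≠ w := (Finset.mem_erase.mp hzS).1
    have hwx : w ≠ x := hxw.symm
    have hwy : w ≠ y := hyw.symm
    have hwz : w ≠ z := hzw.symm
    have hwsxy : w ∉ s(x,y) := by
      rw [Sym2.mem_iff]
      rintro (h | h)
      exacts [hwx h, hwy h]
    have hsxyE' : s(x,y) ∉ E' := fun h => hxyE (Finset.mem_filter.mp h).1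
    have hswxE : s(w,x) ∈ E := by
      have : s(w,x) ∈ E.filter (fun e => w ∈ e) := by rw [hfilterEq]; simp
      exact (Finset.mem_filter.mp this).1
    have hswyE : s(w,y) ∈ E := by
      have : s(w,y) ∈ E.filter (fun e => w ∈ e) := by rw [hfilterEq]; simp
      exact (Finset.mem_filter.mp this).1
    have hswzE : s(w,z) ∈ E := by
      have : s(w,z) ∈ E.filter (fun e => w ∈ e) := by rw [hfilterEq]; simp
      exact (Finset.mem_filter.mp this).1
    have hnexz : s(w,x) ≠ s(w,z) := fun h => hzx ((sym2_wpair_inj hxw h).symm)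
    have hneyz : s(w,y) ≠ s(w,z) := fun h => hzy ((sym2_wpair_inj hyw h).symm)
    have hnexy : s(w,x) ≠ s(w,y) := fun h => hxy (sym2_wpair_inj hxw h)
    have hL2 : LamanE (S.erase w) (insert s(x,y) E') := by
      refine ⟨?_, hSp2, ?_⟩
      · intro e he
        rcases Finset.mem_insert.mp he with rfl | he
        · exact ⟨fun hd => hxy (Sym2.mk_isDiag_iff.mp hd), fun t ht => by
            rcases Sym2.mem_iff.mp ht with rfl | rfl
            exacts [hxS, hyS]⟩
        · exact hE'prop e he
      · rw [Finset.card_insert_of_notMem hsxyE']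
        omega
    obtain ⟨T, F, A, B, hTF, hTFd, hTc, hFc, hAB, hABd, huA, hvB, hFin, hcA, hcB, hcT⟩ :=
      IH (S.card - 1) (by omega) (S.erase w) (insert s(x,y) E') u v (by omega) hL2 huS' hvS' huv
    have hwE2 : ∀ e ∈ insert s(x,y) E', w ∉ e := by
      intro e he
      rcases Finset.mem_insert.mp he with rfl | he
      exacts [hwsxy, hwE' e he]
    have hwT : ∀ e ∈ T, w ∉ e := fun e he => hwE2 e (hTF ▸ Finset.mem_union_left _ he)
    have hwF : ∀ e ∈ F, w ∉ e := fun e he => hwE2 e (hTF ▸ Finset.mem_union_right _ he)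
    have hAsub : A ⊆ S.erase w := hAB ▸ Finset.subset_union_left
    have hBsub : B ⊆ S.erase w := hAB ▸ Finset.subset_union_right
    have hwA : w ∉ A := fun h => (Finset.mem_erase.mp (hAsub h)).1 rfl
    have hwB : w ∉ B := fun h => (Finset.mem_erase.mp (hBsub h)).1 rfl
    have hTeF_shared : (T ∪ F).erase s(x,y) = E' := by
      rw [hTF]; exact Finset.erase_insert hsxyE'
    have hsxyTF : s(x,y) ∈ T ∪ F := by rw [hTF]; exact Finset.mem_insert_self _ _
    rcases Finset.mem_union.mp hsxyTF with hsxyT | hsxyF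
    · -- the broken edge goes to the tree part
      set T' := insert s(w,x) (insert s(w,y) (T.erase s(x,y))) with hT'
      set F' := insert s(w,z) F with hF'
      have hsxyF0 : s(x,y) ∉ F := fun h => Finset.disjoint_left.mp hTFd hsxyT h
      have hTeF : T.erase s(x,y) ∪ F = E' := by
        rw [← hTeF_shared, Finset.erase_union_distrib, Finset.erase_eq_of_notMem hsxyF0]
      have hunion : T' ∪ F' = E := by
        have h1 : T' ∪ F' = {s(w,x), s(w,y), s(w,z)} ∪ (T.erase s(x,y) ∪ F) := by
          rw [hT', hF']
          ext e
          simp only [Finset.mem_union, Finset.mem_insert, Finset.mem_singleton]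
          tauto
        rw [h1, hTeF, ← hfilterEq, hsplitE]
      have hdisj : Disjoint T' F' := by
        rw [Finset.disjoint_left]
        intro e he he'
        rcases Finset.mem_insert.mp he' with rfl | he'
        · rcases Finset.mem_insert.mp he with h | h
          · exact hnexz h.symm
          · rcases Finset.mem_insert.mp h with h | h
            · exact hneyz h.symm
            · exact hwT _ (Finset.mem_of_mem_erase h) (Sym2.mem_mk_left _ _)
        · rcases Finset.mem_insert.mp he with rfl | h
          · exact hwF _ he' (Sym2.mem_mk_left _ _)
          · rcases Finset.mem_insert.mp h with rfl | h
            · exact hwF _ he' (Sym2.mem_mk_left _ _)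
            · exact Finset.disjoint_left.mp hTFd (Finset.mem_of_mem_erase h) he'
      have hTpos : 1 ≤ T.card := Finset.card_pos.mpr ⟨_, hsxyT⟩
      have hswx_notin : s(w,x) ∉ insert s(w,y) (T.erase s(x,y)) := by
        intro h
        rcases Finset.mem_insert.mp h with h | h
        · exact hnexy h
        · exact hwT _ (Finset.mem_of_mem_erase h) (Sym2.mem_mk_left _ _)
      have hswy_notin : s(w,y) ∉ T.erase s(x,y) :=
        fun h => hwT _ (Finset.mem_of_mem_erase h) (Sym2.mem_mk_left _ _)
      have hswz_notinF : s(w,z) ∉ F := fun h => hwF _ h (Sym2.mem_mk_left _ _)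
      have hTc' : T'.card + 1 = S.card := by
        rw [hT', Finset.card_insert_of_notMem hswx_notin,
          Finset.card_insert_of_notMem hswy_notin, Finset.card_erase_of_mem hsxyT]
        omega
      have hFc' : F'.card + 2 = S.card := by
        rw [hF', Finset.card_insert_of_notMem hswz_notinF]
        omega
      have hswxT' : s(w,x) ∈ T' := Finset.mem_insert_self _ _
      have hswyT' : s(w,y) ∈ T' := Finset.mem_insert_of_mem (Finset.mem_insert_self _ _)
      have hrwx : (fromEdgeSet (↑T' : Set (Sym2 V))).Reachable w x :=
        (adj_fe hswxT' hwx).reachable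
      have hrwy : (fromEdgeSet (↑T' : Set (Sym2 V))).Reachable w y :=
        (adj_fe hswyT' hwy).reachable
      have step : ∀ p q, s(p,q) ∈ T → p ≠ q →
          (fromEdgeSet (↑T' : Set (Sym2 V))).Reachable p q := by
        intro p q hpq hne
        by_cases h : s(p,q) = s(x,y)
        · rcases Sym2.eq_iff.mp h with ⟨rfl, rfl⟩ | ⟨rfl, rfl⟩
          · exact hrwx.symm.trans hrwy
          · exact hrwy.symm.trans hrwx
        · exact (adj_fe (Finset.mem_insert_of_mem (Finset.mem_insert_of_mem
            (Finset.mem_erase.mpr ⟨h, hpq⟩))) hne).reachable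
      have hcT' : connOn S T' := by
        have := connOn_insert_vertex hxS hrwx (connOn_trans step hcT)
        rwa [hIE] at this
      have hrwz : (fromEdgeSet (↑F' : Set (Sym2 V))).Reachable w z :=
        (adj_fe (Finset.mem_insert_self _ _) hwz).reachable
      rcases Finset.mem_union.mp (hAB ▸ hzS : z ∈ A ∪ B) with hzA | hzB
      · refine ⟨T', F', insert w A, B, hunion, hdisj, hTc', hFc',
          by rw [Finset.insert_union, hAB, hIE], ?_, Finset.mem_insert_of_mem huA, hvB,
          ?_, ?_, ?_, hcT'⟩
        · rw [Finset.disjoint_insert_left]; exact ⟨hwB, hABd⟩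
        · intro e he
          rcases Finset.mem_insert.mp he with rfl | he
          · exact Or.inl (inside_mk.mpr ⟨Finset.mem_insert_self _ _,
              Finset.mem_insert_of_mem hzA⟩)
          · exact (hFin e he).imp (inside_mono (Finset.subset_insert _ _)) id
        · exact connOn_insert_vertex hzA hrwz (connOn_mono (Finset.subset_insert _ _) hcA)
        · exact connOn_mono (Finset.subset_insert _ _) hcB
      · refine ⟨T', F', A, insert w B, hunion, hdisj, hTc', hFc',
          by rw [Finset.union_insert, hAB, hIE], ?_, huA, Finset.mem_insert_of_mem hvB,
          ?_, ?_, ?_, hcT'⟩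
        · rw [Finset.disjoint_insert_right]; exact ⟨hwA, hABd⟩
        · intro e he
          rcases Finset.mem_insert.mp he with rfl | he
          · exact Or.inr (inside_mk.mpr ⟨Finset.mem_insert_self _ _,
              Finset.mem_insert_of_mem hzB⟩)
          · exact (hFin e he).imp id (inside_mono (Finset.subset_insert _ _))
        · exact connOn_mono (Finset.subset_insert _ _) hcA
        · exact connOn_insert_vertex hzB hrwz (connOn_mono (Finset.subset_insert _ _) hcB)
    · -- the broken edge goes to the forest part
      set T' := insert s(w,z) T with hT'
      set F' := insert s(w,x) (insert s(w,y) (F.erase s(x,y))) with hF'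
      have hsxyT0 : s(x,y) ∉ T := fun h => Finset.disjoint_left.mp hTFd h hsxyF
      have hTeF : T ∪ F.erase s(x,y) = E' := by
        rw [← hTeF_shared, Finset.erase_union_distrib, Finset.erase_eq_of_notMem hsxyT0]
      have hunion : T' ∪ F' = E := by
        have h1 : T' ∪ F' = {s(w,x), s(w,y), s(w,z)} ∪ (T ∪ F.erase s(x,y)) := by
          rw [hT', hF']
          ext e
          simp only [Finset.mem_union, Finset.mem_insert, Finset.mem_singleton]
          tauto
        rw [h1, hTeF, ← hfilterEq, hsplitE]
      have hdisj : Disjoint T' F' := by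
        rw [Finset.disjoint_left]
        intro e he he'
        rcases Finset.mem_insert.mp he with rfl | he
        · rcases Finset.mem_insert.mp he' with h | h
          · exact hnexz h.symm
          · rcases Finset.mem_insert.mp h with h | h
            · exact hneyz h.symm
            · exact hwF _ (Finset.mem_of_mem_erase h) (Sym2.mem_mk_left _ _)
        · rcases Finset.mem_insert.mp he' with rfl | h
          · exact hwT _ he (Sym2.mem_mk_left _ _)
          · rcases Finset.mem_insert.mp h with rfl | h
            · exact hwT _ he (Sym2.mem_mk_left _ _)
            · exact Finset.disjoint_left.mp hTFd he (Finset.mem_of_mem_erase h)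
      have hFpos : 1 ≤ F.card := Finset.card_pos.mpr ⟨_, hsxyF⟩
      have hswx_notin : s(w,x) ∉ insert s(w,y) (F.erase s(x,y)) := by
        intro h
        rcases Finset.mem_insert.mp h with h | h
        · exact hnexy h
        · exact hwF _ (Finset.mem_of_mem_erase h) (Sym2.mem_mk_left _ _)
      have hswy_notin : s(w,y) ∉ F.erase s(x,y) :=
        fun h => hwF _ (Finset.mem_of_mem_erase h) (Sym2.mem_mk_left _ _)
      have hswz_notinT : s(w,z) ∉ T := fun h => hwT _ h (Sym2.mem_mk_left _ _)
      have hTc' : T'.card + 1 = S.card := by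
        rw [hT', Finset.card_insert_of_notMem hswz_notinT]
        omega
      have hFc' : F'.card + 2 = S.card := by
        rw [hF', Finset.card_insert_of_notMem hswx_notin,
          Finset.card_insert_of_notMem hswy_notin, Finset.card_erase_of_mem hsxyF]
        omega
      have hcT' : connOn S T' := by
        have hrwz : (fromEdgeSet (↑T' : Set (Sym2 V))).Reachable w z :=
          (adj_fe (Finset.mem_insert_self _ _) hwz).reachable
        have := connOn_insert_vertex hzS hrwz (connOn_mono (Finset.subset_insert _ _) hcT)
        rwa [hIE] at this
      have hswxF' : s(w,x) ∈ F' := Finset.mem_insert_self _ _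
      have hswyF' : s(w,y) ∈ F' := Finset.mem_insert_of_mem (Finset.mem_insert_self _ _)
      have hrwx : (fromEdgeSet (↑F' : Set (Sym2 V))).Reachable w x :=
        (adj_fe hswxF' hwx).reachable
      have hrwy : (fromEdgeSet (↑F' : Set (Sym2 V))).Reachable w y :=
        (adj_fe hswyF' hwy).reachable
      have step : ∀ p q, s(p,q) ∈ F → p ≠ q →
          (fromEdgeSet (↑F' : Set (Sym2 V))).Reachable p q := by
        intro p q hpq hne
        by_cases h : s(p,q) = s(x,y)
        · rcases Sym2.eq_iff.mp h with ⟨rfl, rfl⟩ | ⟨rfl, rfl⟩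
          · exact hrwx.symm.trans hrwy
          · exact hrwy.symm.trans hrwx
        · exact (adj_fe (Finset.mem_insert_of_mem (Finset.mem_insert_of_mem
            (Finset.mem_erase.mpr ⟨h, hpq⟩))) hne).reachable
      rcases hFin s(x,y) hsxyF with hInA | hInB
      · have hxA : x ∈ A := (inside_mk.mp hInA).1
        have hyA : y ∈ A := (inside_mk.mp hInA).2
        refine ⟨T', F', insert w A, B, hunion, hdisj, hTc', hFc',
          by rw [Finset.insert_union, hAB, hIE], ?_, Finset.mem_insert_of_mem huA, hvB,
          ?_, ?_, ?_, hcT'⟩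
        · rw [Finset.disjoint_insert_left]; exact ⟨hwB, hABd⟩
        · intro e he
          rcases Finset.mem_insert.mp he with rfl | he
          · exact Or.inl (inside_mk.mpr ⟨Finset.mem_insert_self _ _,
              Finset.mem_insert_of_mem hxA⟩)
          · rcases Finset.mem_insert.mp he with rfl | he
            · exact Or.inl (inside_mk.mpr ⟨Finset.mem_insert_self _ _,
                Finset.mem_insert_of_mem hyA⟩)
            · exact (hFin e (Finset.mem_of_mem_erase he)).imp
                (inside_mono (Finset.subset_insert _ _)) id
        · exact connOn_insert_vertex hxA hrwx (connOn_trans step hcA)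
        · exact connOn_trans step hcB
      · have hxB : x ∈ B := (inside_mk.mp hInB).1
        have hyB : y ∈ B := (inside_mk.mp hInB).2
        refine ⟨T', F', A, insert w B, hunion, hdisj, hTc', hFc',
          by rw [Finset.union_insert, hAB, hIE], ?_, huA, Finset.mem_insert_of_mem hvB,
          ?_, ?_, ?_, hcT'⟩
        · rw [Finset.disjoint_insert_right]; exact ⟨hwA, hABd⟩
        · intro e he
          rcases Finset.mem_insert.mp he with rfl | he
          · exact Or.inr (inside_mk.mpr ⟨Finset.mem_insert_self _ _,
              Finset.mem_insert_of_mem hxB⟩)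
          · rcases Finset.mem_insert.mp he with rfl | he
            · exact Or.inr (inside_mk.mpr ⟨Finset.mem_insert_self _ _,
                Finset.mem_insert_of_mem hyB⟩)
            · exact (hFin e (Finset.mem_of_mem_erase he)).imp id
                (inside_mono (Finset.subset_insert _ _))
        · exact connOn_trans step hcA
        · exact connOn_insert_vertex hxB hrwx (connOn_trans step hcB)

end Main
section Trees
variable {V : Type} [Fintype V]

lemma exists_isTree_le : ∀ (n : ℕ) (G : SimpleGraph V), G.edgeSet.ncard ≤ n → G.Connected →
    ∃ T, T ≤ G ∧ T.IsTree := by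
  intro n
  induction n with
  | zero =>
    intro G hle hc
    have h0 : G.edgeSet = ∅ := (Set.ncard_eq_zero (Set.toFinite _)).mp (Nat.le_zero.mp hle)
    refine ⟨G, le_rfl, hc, ?_⟩
    have hbot : G = ⊥ := edgeSet_eq_empty.mp h0
    rw [hbot]
    exact isAcyclic_bot
  | succ n ih =>
    intro G hle hc
    by_cases hA : G.IsAcyclic
    · exact ⟨G, le_rfl, hc, hA⟩
    · rw [isAcyclic_iff_forall_edge_isBridge] at hA
      push_neg at hA
      obtain ⟨e, heE, hnb⟩ := hA
      revert heE hnb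
      induction e using Sym2.ind with
      | _ p q =>
      intro heE hnb
      set G' := G \ fromEdgeSet {s(p,q)} with hG'
      have hE' : G'.edgeSet = G.edgeSet \ {s(p,q)} := by
        rw [hG', edgeSet_sdiff, edgeSet_fromEdgeSet, edgeSet_sdiff_sdiff_isDiag]
      have hreach : G'.Reachable p q := by
        by_contra hr
        exact hnb hr
      have hpre : ∀ x y, G.Adj x y → G'.Reachable x y := by
        intro x y hxy
        by_cases h : s(x,y) = s(p,q)
        · rcases Sym2.eq_iff.mp h with ⟨rfl, rfl⟩ | ⟨rfl, rfl⟩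
          · exact hreach
          · exact hreach.symm
        · refine Adj.reachable ?_
          rw [hG', sdiff_adj]
          refine ⟨hxy, ?_⟩
          rw [fromEdgeSet_adj]
          rintro ⟨hmem, -⟩
          exact h (Set.mem_singleton_iff.mp hmem)
      have hc' : G'.Connected := by
        rw [connected_iff]
        exact ⟨fun x y => reach_of_forall_adj hpre (hc.preconnected x y), hc.nonempty⟩
      have hcard : G'.edgeSet.ncard ≤ n := by
        rw [hE', Set.ncard_sdiff_singleton_of_mem heE]
        have h1 : 0 < G.edgeSet.ncard :=
          (Set.ncard_pos (Set.toFinite _)).mpr ⟨_, heE⟩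
        omega
      obtain ⟨T, hle', hT⟩ := ih G' hcard hc'
      exact ⟨T, hle'.trans sdiff_le, hT⟩

lemma isTree_of_connected_ncard (G : SimpleGraph V) (hc : G.Connected)
    (hn : G.edgeSet.ncard + 1 = Fintype.card V) : G.IsTree := by
  classical
  obtain ⟨T, hle, hT⟩ := exists_isTree_le G.edgeSet.ncard G le_rfl hc
  haveI : Fintype ↥T.edgeSet := Set.Finite.fintype (Set.toFinite _)
  have hcardT : T.edgeFinset.card + 1 = Fintype.card V := hT.card_edgeFinset
  have hncT : T.edgeSet.ncard = T.edgeFinset.card := Set.ncard_eq_toFinset_card' _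
  have hsub : T.edgeSet ⊆ G.edgeSet := edgeSet_mono hle
  have heq : T.edgeSet = G.edgeSet :=
    Set.eq_of_subset_of_ncard_le hsub (by omega) (Set.toFinite _)
  rw [← edgeSet_inj.mp heq]
  exact hT

end Trees
section Bridge

lemma lamanE_of_maxIndep3 {V : Type} [Fintype V] [DecidableEq V] (G : SimpleGraph V)
    [Fintype ↥G.edgeSet] (hG : MaxIndep3 G) :
    LamanE (Finset.univ : Finset V) G.edgeFinset := by
  refine ⟨?_, ?_, ?_⟩
  · intro e he
    rw [mem_edgeFinset] at he
    exact ⟨G.not_isDiag_of_mem_edgeSet he, fun x _ => Finset.mem_univ x⟩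
  · intro X _ h2X
    by_cases h0 : eC G.edgeFinset X = 0
    · omega
    · set H : G.Subgraph :=
        { verts := ↑X
          Adj := fun a b => G.Adj a b ∧ a ∈ X ∧ b ∈ X
          adj_sub := fun h => h.1
          edge_vert := fun h => Finset.mem_coe.mpr h.2.1
          symm := ⟨fun a b h => ⟨h.1.symm, h.2.2, h.2.1⟩⟩ } with hH
      have hedge : H.edgeSet = ↑(G.edgeFinset.filter (Inside X)) := by
        ext e
        induction e using Sym2.ind with
        | _ p q =>
          rw [Subgraph.mem_edgeSet]
          simp only [Finset.mem_coe, Finset.mem_filter, mem_edgeFinset, inside_mk, mem_edgeSet]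
          exact Iff.rfl
      have hne : H.edgeSet.Nonempty := by
        obtain ⟨e, he⟩ := Finset.card_pos.mp (Nat.pos_of_ne_zero h0)
        exact ⟨e, hedge ▸ Finset.mem_coe.mpr he⟩
      have h3 := hG.1 H hne
      unfold subFreedom at h3
      have hv : (H.verts).ncard = X.card := Set.ncard_coe_finset X
      have he : H.edgeSet.ncard = eC G.edgeFinset X := by
        rw [hedge, Set.ncard_coe_finset]; rfl
      rw [hv, he] at h3
      omega
  · have htight := hG.2
    unfold gFreedom at htight
    have h1 : (Set.univ : Set V).ncard = (Finset.univ : Finset V).card := by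
      rw [Set.ncard_univ, Nat.card_eq_fintype_card, Finset.card_univ]
    have h2 : G.edgeSet.ncard = G.edgeFinset.card := Set.ncard_eq_toFinset_card' _
    rw [h1, h2] at htight
    omega

theorem maxIndep3_addEdge_twoSpanningTrees' {V : Type} [Fintype V]
    (G : SimpleGraph V) (hconn : G.Connected) (hG : MaxIndep3 G)
    (u v : V) (huv : u ≠ v) (hadj : ¬ G.Adj u v) :
    TwoSpanningTrees (SimpleGraph.fromEdgeSet (insert s(u, v) G.edgeSet)) := by
  classical
  haveI : Fintype ↥G.edgeSet := Set.Finite.fintype (Set.toFinite _)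
  have hL := lamanE_of_maxIndep3 G hG
  obtain ⟨T, F, A, B, hTF, hTFd, hTc, hFc, hAB, hABd, huA, hvB, hFin, hcA, hcB, hcT⟩ :=
    good_main (Finset.univ : Finset V).card Finset.univ G.edgeFinset u v rfl hL
      (Finset.mem_univ u) (Finset.mem_univ v) huv
  have huvE : s(u,v) ∉ G.edgeFinset := by
    rw [mem_edgeFinset, mem_edgeSet]; exact hadj
  have hndT : ∀ e ∈ T, ¬ e.IsDiag :=
    fun e he => (hL.1 e (hTF ▸ Finset.mem_union_left _ he)).1
  have hndF : ∀ e ∈ F, ¬ e.IsDiag :=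
    fun e he => (hL.1 e (hTF ▸ Finset.mem_union_right _ he)).1
  have hcardV : (Finset.univ : Finset V).card = Fintype.card V := Finset.card_univ
  refine ⟨(↑T : Set (Sym2 V)), ↑(insert s(u,v) F), ?_, ?_, ?_, ?_⟩
  · -- union of the two edge sets
    have hES0 : (fromEdgeSet (insert s(u,v) G.edgeSet)).edgeSet = insert s(u,v) G.edgeSet := by
      rw [edgeSet_fromEdgeSet]
      ext e
      simp only [Set.mem_diff, Set.mem_setOf_eq, Set.mem_insert_iff]
      refine ⟨fun h => h.1, fun h => ⟨h, ?_⟩⟩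
      rcases h with rfl | h
      · exact fun hd => huv (Sym2.mk_isDiag_iff.mp hd)
      · exact G.not_isDiag_of_mem_edgeSet h
    rw [hES0, Finset.coe_insert, Set.union_insert, ← Finset.coe_union, hTF, coe_edgeFinset]
  · -- disjointness
    rw [Set.disjoint_left]
    intro e heT heF
    rw [Finset.mem_coe] at heT
    rw [Finset.coe_insert, Set.mem_insert_iff] at heF
    rcases heF with rfl | heF
    · exact huvE (hTF ▸ Finset.mem_union_left _ heT)
    · exact Finset.disjoint_left.mp hTFd heT (Finset.mem_coe.mp heF)
  · -- first spanning tree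
    have hES : (fromEdgeSet (↑T : Set (Sym2 V))).edgeSet = ↑T := by
      rw [edgeSet_fromEdgeSet]
      ext e
      simp only [Set.mem_diff, Finset.mem_coe, Set.mem_setOf_eq]
      exact ⟨fun h => h.1, fun h => ⟨h, hndT e h⟩⟩
    apply isTree_of_connected_ncard
    · rw [connected_iff]
      exact ⟨fun x y => hcT x (Finset.mem_univ x) y (Finset.mem_univ y), ⟨u⟩⟩
    · rw [hES, Set.ncard_coe_finset]
      omega
  · -- second spanning tree
    have hndF' : ∀ e ∈ insert s(u,v) F, ¬ e.IsDiag := by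
      intro e he
      rcases Finset.mem_insert.mp he with rfl | he
      · exact fun hd => huv (Sym2.mk_isDiag_iff.mp hd)
      · exact hndF e he
    have hES : (fromEdgeSet (↑(insert s(u,v) F) : Set (Sym2 V))).edgeSet
        = ↑(insert s(u,v) F) := by
      rw [edgeSet_fromEdgeSet]
      ext e
      simp only [Set.mem_diff, Finset.mem_coe, Set.mem_setOf_eq]
      exact ⟨fun h => h.1, fun h => ⟨h, hndF' e h⟩⟩
    apply isTree_of_connected_ncard
    · rw [connected_iff]
      refine ⟨?_, ⟨u⟩⟩
      have hradj : (fromEdgeSet (↑(insert s(u,v) F) : Set (Sym2 V))).Reachable u v :=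
        (adj_fe (Finset.mem_insert_self _ _) huv).reachable
      have hsubA : connOn A (insert s(u,v) F) :=
        connOn_mono (Finset.subset_insert _ _) hcA
      have hsubB : connOn B (insert s(u,v) F) :=
        connOn_mono (Finset.subset_insert _ _) hcB
      have hall : ∀ x : V, (fromEdgeSet (↑(insert s(u,v) F) : Set (Sym2 V))).Reachable x u := by
        intro x
        rcases Finset.mem_union.mp (hAB ▸ Finset.mem_univ x : x ∈ A ∪ B) with hxA | hxB
        · exact hsubA x hxA u huA
        · exact (hsubB x hxB v hvB).trans hradj.symm
      intro x y
      exact (hall x).trans (hall y).symm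
    · rw [hES, Set.ncard_coe_finset,
        Finset.card_insert_of_notMem (fun h => huvE (hTF ▸ Finset.mem_union_right _ h))]
      omega

end Bridge

/-- If `G` is a finite connected graph which is maximally
independent of type 3 and `u`, `v` are distinct nonadjacent vertices, then the
graph obtained from `G` by adding the edge `(u,v)` is an edge-disjoint union of
two spanning trees. -/
theorem maxIndep3_addEdge_twoSpanningTrees {V : Type} [Fintype V]
    (G : SimpleGraph V) (hconn : G.Connected) (hG : MaxIndep3 G)
    (u v : V) (huv : u ≠ v) (hadj : ¬ G.Adj u v) :
    TwoSpanningTrees (SimpleGraph.fromEdgeSet (insert s(u, v) G.edgeSet)) := by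
  exact maxIndep3_addEdge_twoSpanningTrees' G hconn hG u v huv hadj
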